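/- Let Γ₃ be the biderivation on ℝ[θ₁,θ₂] with Γ₃(θ₁,θ₁) = 4θ₁(1−θ₁), Γ₃(θ₁,θ₂) = −2nθ₁θ₂, Γ₃(θ₂,θ₂) = n²((1−θ₁)^{n−1} − θ₂²). Then Γ₃(θ₁,θ₁) = θ₁·(4(1−θ₁)), Γ₃(θ₂,θ₁) = θ₁·(−2nθ₂), and for P₁ = (1−θ₁)ⁿ − θ₂²: Γ₃(θ₁,P₁) = −4nθ₁P₁ and Γ₃(θ₂,P₁) = −2n²θ₂P₁. -/
import Mathlib


open MvPolynomial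

/-- For the biderivation `Γ₃` on `ℝ[θ₁,θ₂]` determined by its values on generators,
the chain rule gives `Γ₃(θᵢ, P) = ∑ⱼ Γ₃(θᵢ,θⱼ) ∂ⱼP`. -/
theorem stmt7 (n : ℕ) (hn : 1 ≤ n) :
    let θ₁ : MvPolynomial (Fin 2) ℝ := X 0
    let θ₂ : MvPolynomial (Fin 2) ℝ := X 1
    let N : MvPolynomial (Fin 2) ℝ := (n : MvPolynomial (Fin 2) ℝ)
    let g11 := 4 * θ₁ * (1 - θ₁)
    let g12 := -2 * N * θ₁ * θ₂
    let g22 := N ^ 2 * ((1 - θ₁) ^ (n - 1) - θ₂ ^ 2)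
    let P₁ : MvPolynomial (Fin 2) ℝ := (1 - θ₁) ^ n - θ₂ ^ 2
    g11 = θ₁ * (4 * (1 - θ₁)) ∧
    g12 = θ₁ * (-2 * N * θ₂) ∧
    g11 * pderiv 0 P₁ + g12 * pderiv 1 P₁ = -4 * N * θ₁ * P₁ ∧
    g12 * pderiv 0 P₁ + g22 * pderiv 1 P₁ = -2 * N ^ 2 * θ₂ * P₁ := by
  intro θ₁ θ₂ N g11 g12 g22 P₁
  have h0 : pderiv (0 : Fin 2) P₁ = -(N * (1 - θ₁) ^ (n - 1)) := by
    show pderiv (0:Fin 2) ((1 - X 0)^n - X 1 ^ 2) = _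
    rw [map_sub, Derivation.leibniz_pow, Derivation.leibniz_pow]
    simp [sub_eq_add_neg, θ₁, N]
  have h1 : pderiv (1 : Fin 2) P₁ = -(2 * θ₂) := by
    show pderiv (1:Fin 2) ((1 - X 0)^n - X 1 ^ 2) = _
    rw [map_sub, Derivation.leibniz_pow, Derivation.leibniz_pow]
    simp [sub_eq_add_neg, θ₂]
  have hpow : (1 - θ₁) ^ n = (1 - θ₁) ^ (n - 1) * (1 - θ₁) := by
    conv_lhs => rw [show n = (n-1)+1 by omega]
    rw [pow_succ]
  refine ⟨by ring, by ring, ?_, ?_⟩ <;>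
  · show _ * pderiv _ P₁ + _ * pderiv _ P₁ = _
    rw [h0, h1]
    simp only [g11, g12, g22, P₁, hpow]
    ring
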